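/- Let B = ⟨q⟩ be an infinite cyclic group acting on the abelian group A = ℤ[x, x^{-1}, f_1^{-1}, ..., f_n^{-1}, 1/k] (k ≥ 2 an integer) with q acting as multiplication by k. Then H^0(B, A) = 0 and H^1(B, A) ≅ (ℤ/(k-1)ℤ)[x, x^{-1}, f_1^{-1}, ..., f_n^{-1}], i.e., H^1(B, A) is the cokernel of multiplication by k - 1 on A, which is A/(k-1)A. -/

import Mathlib

open scoped Classical

/-- The image of an integer polynomial in the field of rational functions `ℚ(x)`. -/
noncomputable def toRF (g : Polynomial ℤ) : RatFunc ℚ :=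
  algebraMap (Polynomial ℚ) (RatFunc ℚ) (g.map (Int.castRingHom ℚ))

noncomputable def phiRF : Polynomial ℤ →+* RatFunc ℚ :=
  (algebraMap (Polynomial ℚ) (RatFunc ℚ)).comp (Polynomial.mapRingHom (Int.castRingHom ℚ))

lemma toRF_eq (g : Polynomial ℤ) : toRF g = phiRF g := rfl

lemma phiRF_injective : Function.Injective phiRF :=
  (IsFractionRing.injective (Polynomial ℚ) (RatFunc ℚ)).comp
    (Polynomial.map_injective _ Int.cast_injective)

set_option maxHeartbeats 2000000 in
/-- for `B = ⟨q⟩` infinite cyclic acting on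
`A = ℤ[x, x⁻¹, f₁⁻¹, …, fₙ⁻¹, 1/k]` with `q` acting as multiplication by `k ≥ 2`,
one has `H⁰(B, A) = ker(k-1 : A → A) = 0` and
`H¹(B, A) = A/(k-1)A ≅ (ℤ/(k-1)ℤ)[x, x⁻¹, f₁⁻¹, …, fₙ⁻¹]`. -/
theorem stmt12 (n : ℕ) (k : ℕ) (hk : 2 ≤ k)
    (f : Fin n → Polynomial ℤ)
    (hirr : ∀ i, Irreducible (f i))
    (hmonic : ∀ i, (f i).Monic)
    (hdeg : ∀ i, 0 < (f i).natDegree)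
    (A : Subring (RatFunc ℚ))
    (hA : A = Subring.closure (Set.range
      fun p : ℤ × ℤ × (Fin n → ℤ) =>
        (k : RatFunc ℚ) ^ p.1 * toRF Polynomial.X ^ p.2.1 * ∏ i, toRF (f i) ^ p.2.2 i)) :
    (∀ a : A, ((k : A) - 1) * a = 0 → a = 0) ∧
    Nonempty ((A ⧸ Ideal.span {((k : A) - 1)}) ≃+*
      Localization (Submonoid.closure
        (insert (Polynomial.X : Polynomial (ZMod (k - 1)))
          (Set.range fun i => (f i).map (Int.castRingHom (ZMod (k - 1))))))) := by
  have hCZ : CharZero (RatFunc ℚ) :=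
    charZero_of_injective_algebraMap (algebraMap ℚ (RatFunc ℚ)).injective
  -- generators are in A
  have hAgen : ∀ p : ℤ × ℤ × (Fin n → ℤ),
      (k : RatFunc ℚ) ^ p.1 * toRF Polynomial.X ^ p.2.1 * ∏ i, toRF (f i) ^ p.2.2 i ∈ A :=
    fun p => hA ▸ Subring.subset_closure ⟨p, rfl⟩
  have hprod : ∀ (e : ℤ) (i : Fin n),
      (∏ j, toRF (f j) ^ (if j = i then e else 0)) = toRF (f i) ^ e := by
    intro e i
    have h1 : ∀ j : Fin n,
        toRF (f j) ^ (if j = i then e else 0) = (if j = i then toRF (f j) ^ e else 1) := by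
      intro j; split <;> simp
    simp only [h1, Finset.prod_ite_eq' Finset.univ i (fun j => toRF (f j) ^ e),
      Finset.mem_univ, if_true]
  have hX : phiRF Polynomial.X ∈ A := by
    have h := hAgen (0, 1, fun _ => 0)
    simpa [toRF_eq] using h
  have hXinv : (phiRF Polynomial.X)⁻¹ ∈ A := by
    have h := hAgen (0, -1, fun _ => 0)
    simpa [toRF_eq] using h
  have hkinv : (k : RatFunc ℚ)⁻¹ ∈ A := by
    have h := hAgen (-1, 0, fun _ => 0)
    simpa using h
  have hfinv : ∀ i, (phiRF (f i))⁻¹ ∈ A := by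
    intro i
    have h := hAgen (0, 0, fun j => if j = i then (-1 : ℤ) else 0)
    simp only [zpow_zero, one_mul] at h
    rw [hprod (-1) i] at h
    simpa [toRF_eq] using h
  have hφmem : ∀ g : Polynomial ℤ, phiRF g ∈ A := by
    intro g
    induction g using Polynomial.induction_on' with
    | add p q hp hq => rw [map_add]; exact add_mem hp hq
    | monomial m a =>
        rw [← Polynomial.C_mul_X_pow_eq_monomial, map_mul, map_pow]
        refine mul_mem ?_ (pow_mem hX m)
        have hca : phiRF (Polynomial.C a) = (a : RatFunc ℚ) := by
          simp [phiRF]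
        rw [hca]; exact intCast_mem A a
  -- the multiplicative set in ℤ[X]
  set S : Submonoid (Polynomial ℤ) :=
    Submonoid.closure (insert ((k : Polynomial ℤ)) (insert Polynomial.X (Set.range f))) with hS
  have hSne : ∀ s ∈ S, s ≠ 0 := by
    intro s hs
    induction hs using Submonoid.closure_induction with
    | mem x hx =>
        rcases hx with rfl | rfl | ⟨i, rfl⟩
        · exact_mod_cast Nat.cast_ne_zero.mpr (by omega)
        · exact Polynomial.X_ne_zero
        · exact (hmonic i).ne_zero
    | one => exact one_ne_zero
    | mul x y hx hy ihx ihy => exact mul_ne_zero ihx ihy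
  have hSphi : ∀ s ∈ S, phiRF s ≠ 0 := by
    intro s hs h0
    exact hSne s hs (phiRF_injective (by simpa using h0))
  have hSinv : ∀ s ∈ S, (phiRF s)⁻¹ ∈ A := by
    intro s hs
    induction hs using Submonoid.closure_induction with
    | mem x hx =>
        rcases hx with rfl | rfl | ⟨i, rfl⟩
        · simpa using hkinv
        · exact hXinv
        · exact hfinv i
    | one => simpa using one_mem A
    | mul x y hx hy ihx ihy =>
        rw [map_mul, mul_inv]
        exact mul_mem ihx ihy
  -- the restricted ring hom ℤ[X] → A
  let φ' : Polynomial ℤ →+* A := phiRF.codRestrict A.toSubsemiring hφmem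
  have hφ'val : ∀ g, (φ' g : RatFunc ℚ) = phiRF g := fun g => rfl
  have hφ'inj : Function.Injective φ' := fun a b h =>
    phiRF_injective (congrArg Subtype.val h)
  letI : Algebra (Polynomial ℤ) A := φ'.toAlgebra
  have halg : ∀ g, algebraMap (Polynomial ℤ) A g = φ' g := fun g => rfl
  -- the subring of elements of the form phiRF g / phiRF s
  let B : Subring (RatFunc ℚ) :=
    { carrier := {x | ∃ g s, s ∈ S ∧ x * phiRF s = phiRF g}
      zero_mem' := ⟨0, 1, one_mem S, by simp⟩
      one_mem' := ⟨1, 1, one_mem S, by simp⟩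
      add_mem' := by
        rintro x y ⟨g1, s1, hs1, h1⟩ ⟨g2, s2, hs2, h2⟩
        refine ⟨g1 * s2 + g2 * s1, s1 * s2, mul_mem hs1 hs2, ?_⟩
        simp only [map_add, map_mul]
        linear_combination phiRF s2 * h1 + phiRF s1 * h2
      mul_mem' := by
        rintro x y ⟨g1, s1, hs1, h1⟩ ⟨g2, s2, hs2, h2⟩
        refine ⟨g1 * g2, s1 * s2, mul_mem hs1 hs2, ?_⟩
        simp only [map_mul]
        linear_combination (y * phiRF s2) * h1 + phiRF g1 * h2
      neg_mem' := by
        rintro x ⟨g, s, hs, h⟩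
        exact ⟨-g, s, hs, by rw [neg_mul, h, map_neg]⟩ }
  have hzpowB : ∀ r ∈ S, ∀ z : ℤ, (phiRF r) ^ z ∈ B := by
    intro r hr z
    have hr0 : phiRF r ≠ 0 := hSphi r hr
    rcases z with m | m
    · exact ⟨r ^ m, 1, one_mem S, by simp [map_pow, zpow_natCast]⟩
    · refine ⟨1, r ^ (m + 1), pow_mem hr (m + 1), ?_⟩
      rw [map_pow, map_one, zpow_negSucc, inv_mul_cancel₀ (pow_ne_zero _ hr0)]
  have hkS : (k : Polynomial ℤ) ∈ S := Submonoid.subset_closure (Set.mem_insert _ _)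
  have hXS : (Polynomial.X : Polynomial ℤ) ∈ S :=
    Submonoid.subset_closure (Set.mem_insert_of_mem _ (Set.mem_insert _ _))
  have hfS : ∀ i, f i ∈ S := fun i =>
    Submonoid.subset_closure (Set.mem_insert_of_mem _ (Set.mem_insert_of_mem _ ⟨i, rfl⟩))
  have hAB : ∀ a : A, (a : RatFunc ℚ) ∈ B := by
    intro a
    have h2 : (a : RatFunc ℚ) ∈ Subring.closure (Set.range
        fun p : ℤ × ℤ × (Fin n → ℤ) =>
          (k : RatFunc ℚ) ^ p.1 * toRF Polynomial.X ^ p.2.1 * ∏ i, toRF (f i) ^ p.2.2 i) :=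
      hA ▸ a.2
    refine Subring.closure_le.mpr ?_ h2
    rintro _ ⟨p, rfl⟩
    have h1 : ((k : RatFunc ℚ)) ^ p.1 ∈ B := by
      have : ((k : RatFunc ℚ)) = phiRF ((k : Polynomial ℤ)) := by simp
      rw [this]; exact hzpowB _ hkS p.1
    have h2 : toRF Polynomial.X ^ p.2.1 ∈ B := hzpowB _ hXS p.2.1
    have h3 : (∏ i, toRF (f i) ^ p.2.2 i) ∈ B :=
      prod_mem fun i _ => hzpowB _ (hfS i) (p.2.2 i)
    exact mul_mem (mul_mem h1 h2) h3
  have hlocA : IsLocalization S A := by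
    refine ⟨⟨?_, ?_, ?_⟩⟩
    · rintro ⟨y, hy⟩
      refine isUnit_iff_exists_inv.mpr ⟨⟨(phiRF y)⁻¹, hSinv y hy⟩, ?_⟩
      exact Subtype.ext (mul_inv_cancel₀ (hSphi y hy))
    · intro z
      obtain ⟨g, s, hs, h⟩ := hAB z
      exact ⟨(g, ⟨s, hs⟩), Subtype.ext h⟩
    · intro x y h
      have hxy : x = y := hφ'inj h
      exact ⟨1, by rw [hxy]⟩
  -- first conjunct
  have hk1ne : ((k : RatFunc ℚ) - 1) ≠ 0 := by
    haveI := hCZ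
    have : ((k : RatFunc ℚ)) ≠ 1 := by
      rw [show (1 : RatFunc ℚ) = ((1 : ℕ) : RatFunc ℚ) by norm_num, Ne, Nat.cast_inj]
      omega
    exact sub_ne_zero.mpr this
  have hfirst : ∀ a : A, ((k : A) - 1) * a = 0 → a = 0 := by
    intro a h
    have hval : (((k : A) - 1 : A) : RatFunc ℚ) * (a : RatFunc ℚ) = 0 := by
      exact_mod_cast congrArg Subtype.val h
    have hc : (((k : A) - 1 : A) : RatFunc ℚ) = (k : RatFunc ℚ) - 1 := by push_cast; ring
    rw [hc] at hval
    rcases mul_eq_zero.mp hval with h0 | h0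
    · exact absurd h0 hk1ne
    · exact Subtype.ext h0
  refine ⟨hfirst, ?_⟩
  -- now the quotient part
  have hm1 : 1 ≤ k := by omega
  have hmk : (k - 1) + 1 = k := by omega
  set T := Polynomial (ZMod (k - 1)) with hT
  let p : Polynomial ℤ →+* T := Polynomial.mapRingHom (Int.castRingHom (ZMod (k - 1)))
  have hpsurj : Function.Surjective p :=
    Polynomial.map_surjective _ ZMod.intCast_surjective
  set I : Ideal A := Ideal.span {((k : A) - 1)} with hI
  let mk : A →+* A ⧸ I := Ideal.Quotient.mk I
  let q0 : Polynomial ℤ →+* A ⧸ I := mk.comp φ'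
  have hφ'C : φ' (Polynomial.C ((k : ℤ) - 1)) = (k : A) - 1 := by
    apply Subtype.ext
    rw [hφ'val]
    push_cast [phiRF]
    simp
  have hq0C : q0 (Polynomial.C ((k : ℤ) - 1)) = 0 := by
    show mk (φ' _) = 0
    rw [hφ'C]
    exact Ideal.Quotient.eq_zero_iff_mem.mpr (Ideal.subset_span rfl)
  have hker : RingHom.ker p ≤ RingHom.ker q0 := by
    intro g hg
    have hg0 : p g = 0 := hg
    have hdvd : Polynomial.C ((k : ℤ) - 1) ∣ g := by
      rw [Polynomial.C_dvd_iff_dvd_coeff]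
      intro i
      have : ((g.coeff i : ℤ) : ZMod (k - 1)) = 0 := by
        have h6 : (Polynomial.map (Int.castRingHom (ZMod (k - 1))) g).coeff i = 0 := by
          rw [show Polynomial.map (Int.castRingHom (ZMod (k - 1))) g = p g from rfl, hg0]
          simp
        rwa [Polynomial.coeff_map, eq_intCast] at h6
      have := (ZMod.intCast_zmod_eq_zero_iff_dvd _ _).mp this
      have hkk : ((k - 1 : ℕ) : ℤ) = (k : ℤ) - 1 := by push_cast [Nat.cast_sub hm1]; ring
      rwa [hkk] at this
    obtain ⟨h, rfl⟩ := hdvd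
    rw [RingHom.mem_ker, map_mul, hq0C, zero_mul]
  let ψ : T →+* A ⧸ I := p.liftOfSurjective hpsurj ⟨q0, hker⟩
  have hψ : ∀ g, ψ (p g) = q0 g := fun g =>
    p.liftOfRightInverse_comp_apply _ _ ⟨q0, hker⟩ g
  letI : Algebra T (A ⧸ I) := ψ.toAlgebra
  have halgT : ∀ t, algebraMap T (A ⧸ I) t = ψ t := fun t => rfl
  set S' : Submonoid T := Submonoid.closure
      (insert (Polynomial.X : Polynomial (ZMod (k - 1)))
        (Set.range fun i => (f i).map (Int.castRingHom (ZMod (k - 1))))) with hS'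
  have hpk1 : p ((k : Polynomial ℤ)) = 1 := by
    have h1 : ((k : ZMod (k - 1))) = 1 := by
      have := ZMod.natCast_self (k - 1)
      calc ((k : ZMod (k - 1))) = (((k - 1) + 1 : ℕ) : ZMod (k - 1)) := by rw [hmk]
      _ = 1 := by push_cast [this]; ring
    rw [map_natCast, ← Polynomial.C_eq_natCast, h1, map_one]
  have hpS : ∀ s ∈ S, p s ∈ S' := by
    intro s hs
    induction hs using Submonoid.closure_induction with
    | mem x hx =>
        rcases hx with rfl | rfl | ⟨i, rfl⟩
        · rw [hpk1]; exact one_mem S'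
        · rw [show p Polynomial.X = Polynomial.X from Polynomial.map_X _]
          exact Submonoid.subset_closure (Set.mem_insert _ _)
        · exact Submonoid.subset_closure (Set.mem_insert_of_mem _ ⟨i, rfl⟩)
    | one => rw [map_one]; exact one_mem S'
    | mul x y hx hy ihx ihy => rw [map_mul]; exact mul_mem ihx ihy
  have hS'p : ∀ y ∈ S', ∃ s ∈ S, p s = y := by
    intro y hy
    induction hy using Submonoid.closure_induction with
    | mem x hx =>
        rcases hx with rfl | ⟨i, rfl⟩
        · exact ⟨Polynomial.X, hXS, Polynomial.map_X _⟩
        · exact ⟨f i, hfS i, rfl⟩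
    | one => exact ⟨1, one_mem S, map_one p⟩
    | mul x y hx hy ihx ihy =>
        obtain ⟨s1, hs1, rfl⟩ := ihx
        obtain ⟨s2, hs2, rfl⟩ := ihy
        exact ⟨s1 * s2, mul_mem hs1 hs2, map_mul p s1 s2⟩
  have hS'reg : ∀ y ∈ S', IsRegular y := by
    intro y hy
    induction hy using Submonoid.closure_induction with
    | mem x hx =>
        rcases hx with rfl | ⟨i, rfl⟩
        · exact Polynomial.monic_X.isRegular
        · exact ((hmonic i).map _).isRegular
    | one => exact isRegular_one
    | mul x y hx hy ihx ihy => exact ihx.mul ihy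
  have hpC0 : p (Polynomial.C ((k : ℤ) - 1)) = 0 := by
    show Polynomial.map (Int.castRingHom (ZMod (k - 1))) (Polynomial.C ((k : ℤ) - 1)) = 0
    rw [Polynomial.map_C]
    have h2 : (((k : ℤ) - 1 : ℤ) : ZMod (k - 1)) = 0 := by
      have hkk : ((k : ℤ) - 1) = ((k - 1 : ℕ) : ℤ) := by push_cast [Nat.cast_sub hm1]; ring
      rw [hkk, ZMod.intCast_zmod_eq_zero_iff_dvd]
    simp [eq_intCast, h2]
  have hlocQ : IsLocalization S' (A ⧸ I) := by
    refine ⟨⟨?_, ?_, ?_⟩⟩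
    · rintro ⟨y, hy⟩
      obtain ⟨s, hsS, rfl⟩ := hS'p y hy
      have : IsUnit (φ' s) := hlocA.toIsLocalizationMap.map_units ⟨s, hsS⟩
      rw [halgT, hψ]
      exact this.map mk
    · intro z
      obtain ⟨a, rfl⟩ := Ideal.Quotient.mk_surjective z
      obtain ⟨⟨g, s⟩, hsur⟩ := IsLocalization.surj (M := S) (a : A)
      refine ⟨(p g, ⟨p s.1, hpS s.1 s.2⟩), ?_⟩
      rw [halgT, halgT, hψ, hψ]
      show mk a * mk (φ' s.1) = mk (φ' g)
      rw [← map_mul]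
      exact congrArg mk hsur
    · intro t1 t2 h
      obtain ⟨g1, rfl⟩ := hpsurj t1
      obtain ⟨g2, rfl⟩ := hpsurj t2
      rw [halgT, halgT, hψ, hψ] at h
      have hmem : φ' g1 - φ' g2 ∈ I :=
        (Ideal.Quotient.mk_eq_mk_iff_sub_mem (φ' g1) (φ' g2)).mp h
      obtain ⟨a, ha⟩ := Ideal.mem_span_singleton'.mp (hI ▸ hmem)
      obtain ⟨⟨h0, s⟩, hsur⟩ := IsLocalization.surj (M := S) a
      have hsur' : a * φ' (s : Polynomial ℤ) = φ' h0 := hsur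
      have key : φ' ((g1 - g2) * (s : Polynomial ℤ)) =
          φ' (Polynomial.C ((k : ℤ) - 1) * h0) := by
        rw [map_mul, map_mul, map_sub, hφ'C]
        linear_combination ((k : ↥A) - 1) * hsur' - (φ' (s : Polynomial ℤ)) * ha
      have key2 : (g1 - g2) * (s : Polynomial ℤ) = Polynomial.C ((k : ℤ) - 1) * h0 :=
        hφ'inj key
      have key3 : (p g1 - p g2) * p (s : Polynomial ℤ) = 0 := by
        have h5 := congrArg p key2
        rw [map_mul, map_mul, hpC0, zero_mul, map_sub] at h5
        exact h5
      have hreg : IsRegular (p (s : Polynomial ℤ)) := hS'reg _ (hpS _ s.2)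
      have : p g1 - p g2 = 0 := by
        have h4 : (p g1 - p g2) * p (s : Polynomial ℤ) = 0 * p (s : Polynomial ℤ) := by
          rw [key3, zero_mul]
        exact hreg.right h4
      refine ⟨1, ?_⟩
      rw [sub_eq_zero.mp this]
  exact ⟨(IsLocalization.algEquiv S' (A ⧸ I) (Localization S')).toRingEquiv⟩
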